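/- Let (p_n)_{n≥1} be a strictly increasing sequence of positive real numbers tending to infinity, and let (α_n)_{n≥1} be real numbers with ∑_{n=1}^∞ |α_n| < ∞. If ∑_{n=1}^∞ α_n sin(p_n t) = 0 for every t > 0, then α_n = 0 for every n ≥ 1. -/

import Mathlib

open Real Filter

open Topology intervalIntegral in
private lemma integral_cos_mul'' (c : ℝ) (hc : c ≠ 0) (T : ℝ) :
    ∫ t in (0:ℝ)..T, Real.cos (c * t) = Real.sin (c * T) / c := by
  rw [intervalIntegral.integral_comp_mul_left (fun x => Real.cos x) hc]
  simp [integral_cos, div_eq_inv_mul]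

open Topology intervalIntegral in
private lemma integral_sin_mul_sin'' (a b : ℝ) (hab : a - b ≠ 0) (hb : a + b ≠ 0) (T : ℝ) :
    ∫ t in (0:ℝ)..T, Real.sin (a * t) * Real.sin (b * t)
      = Real.sin ((a - b) * T) / (2 * (a - b)) - Real.sin ((a + b) * T) / (2 * (a + b)) := by
  have h : ∀ t : ℝ, Real.sin (a * t) * Real.sin (b * t)
      = Real.cos ((a - b) * t) / 2 - Real.cos ((a + b) * t) / 2 := by
    intro t
    rw [sub_mul, add_mul, Real.cos_sub, Real.cos_add]
    ring
  simp_rw [h]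
  rw [intervalIntegral.integral_sub, intervalIntegral.integral_div, intervalIntegral.integral_div,
    integral_cos_mul'' _ hab, integral_cos_mul'' _ hb]
  · field_simp
  · exact ((Real.continuous_cos.comp (continuous_const.mul continuous_id)).intervalIntegrable 0 T).div_const 2
  · exact ((Real.continuous_cos.comp (continuous_const.mul continuous_id)).intervalIntegrable 0 T).div_const 2

open Topology intervalIntegral in
private lemma integral_sin_sq'' (a : ℝ) (ha : a ≠ 0) (T : ℝ) :
    ∫ t in (0:ℝ)..T, Real.sin (a * t) ^ 2
      = T / 2 - Real.sin (a * T) * Real.cos (a * T) / (2 * a) := by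
  rw [intervalIntegral.integral_comp_mul_left (fun x => Real.sin x ^ 2) ha]
  rw [integral_sin_sq]
  field_simp
  rw [smul_eq_mul, mul_zero, Real.sin_zero]
  linear_combination (a * T - Real.sin (a * T) * Real.cos (a * T)) * mul_one_div_cancel ha

open Topology in
private lemma tendsto_of_abs_sub_le' (h : ℝ → ℝ) (L C : ℝ)
    (hb : ∀ᶠ T in atTop, |h T - L| ≤ C / T) : Tendsto h atTop (𝓝 L) := by
  have hg : Tendsto (fun T : ℝ => C / T) atTop (𝓝 0) :=
    Tendsto.div_atTop tendsto_const_nhds tendsto_id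
  have h0 : Tendsto (fun T => h T - L) atTop (𝓝 0) :=
    squeeze_zero_norm' (by simpa [Real.norm_eq_abs] using hb) hg
  simpa using h0.add (tendsto_const_nhds (x := L))

open Topology in
theorem sine_series_uniqueness
    (p : ℕ → ℝ) (hmono : StrictMono p) (hpos : ∀ n, 0 < p n)
    (htop : Tendsto p atTop atTop)
    (α : ℕ → ℝ) (hsum : Summable (fun n => |α n|))
    (hzero : ∀ t : ℝ, 0 < t → ∑' n, α n * Real.sin (p n * t) = 0) :
    ∀ n, α n = 0 := by
  intro m
  set q : ℝ := p m with hq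
  have hq0 : 0 < q := hpos m
  set I : ℕ → ℝ → ℝ := fun n T => ∫ t in (0:ℝ)..T, Real.sin (p n * t) * Real.sin (q * t) with hI
  -- Step 1: swap sum and integral
  have key : ∀ T : ℝ, 0 < T → ∑' n, α n * I n T = 0 := by
    intro T hT
    have hswap : ∫ t in Set.Ioc (0:ℝ) T, (∑' n, α n * (Real.sin (p n * t) * Real.sin (q * t)))
        = ∑' n, ∫ t in Set.Ioc (0:ℝ) T, α n * (Real.sin (p n * t) * Real.sin (q * t)) := by
      apply MeasureTheory.integral_tsum
      · intro n
        exact (Continuous.aestronglyMeasurable (by continuity))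
      · have hb : ∀ n, (∫⁻ t in Set.Ioc (0:ℝ) T, ‖α n * (Real.sin (p n * t) * Real.sin (q * t))‖₊)
            ≤ (‖α n‖₊ : ENNReal) * ENNReal.ofReal T := by
          intro n
          calc (∫⁻ t in Set.Ioc (0:ℝ) T, ‖α n * (Real.sin (p n * t) * Real.sin (q * t))‖₊)
              ≤ ∫⁻ _ in Set.Ioc (0:ℝ) T, (‖α n‖₊ : ENNReal) := by
                apply MeasureTheory.lintegral_mono
                intro t
                refine ENNReal.coe_le_coe.mpr ?_
                rw [nnnorm_mul]
                refine mul_le_of_le_one_right (by positivity) ?_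
                have h1 : ‖Real.sin (p n * t) * Real.sin (q * t)‖ ≤ 1 := by
                  rw [norm_mul]
                  exact mul_le_one₀ (by rw [Real.norm_eq_abs]; exact Real.abs_sin_le_one _)
                    (norm_nonneg _) (by rw [Real.norm_eq_abs]; exact Real.abs_sin_le_one _)
                exact_mod_cast h1
            _ = (‖α n‖₊ : ENNReal) * ENNReal.ofReal T := by
                rw [MeasureTheory.lintegral_const, MeasureTheory.Measure.restrict_apply_univ,
                  Real.volume_Ioc]
                norm_num
        refine ne_top_of_le_ne_top ?_ (ENNReal.tsum_le_tsum hb)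
        rw [ENNReal.tsum_mul_right]
        refine ENNReal.mul_ne_top ?_ ENNReal.ofReal_ne_top
        rw [ENNReal.tsum_coe_ne_top_iff_summable]
        rw [← NNReal.summable_coe]
        simpa [Real.norm_eq_abs] using hsum
    have hzero' : ∫ t in Set.Ioc (0:ℝ) T,
        (∑' n, α n * (Real.sin (p n * t) * Real.sin (q * t))) = 0 := by
      rw [MeasureTheory.setIntegral_congr_fun measurableSet_Ioc
        (g := fun _ => (0:ℝ)) ?_, MeasureTheory.integral_zero]
      intro t ht
      have h2 : ∑' n, α n * (Real.sin (p n * t) * Real.sin (q * t))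
          = (∑' n, α n * Real.sin (p n * t)) * Real.sin (q * t) := by
        rw [← tsum_mul_right]
        congr 1; ext n; ring
      show ∑' n, α n * (Real.sin (p n * t) * Real.sin (q * t)) = 0
      rw [h2, hzero t ht.1, zero_mul]
    have h3 : ∑' n, ∫ t in Set.Ioc (0:ℝ) T, α n * (Real.sin (p n * t) * Real.sin (q * t)) = 0 := by
      rw [← hswap, hzero']
    calc ∑' n, α n * I n T
        = ∑' n, ∫ t in Set.Ioc (0:ℝ) T, α n * (Real.sin (p n * t) * Real.sin (q * t)) := by
          congr 1; ext n
          show α n * (∫ t in (0:ℝ)..T, Real.sin (p n * t) * Real.sin (q * t)) = _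
          rw [intervalIntegral.integral_of_le hT.le, MeasureTheory.integral_const_mul]
      _ = 0 := h3
  -- Step 2: pointwise limits and bounds for F T n := (2/T) * (α n * I n T)
  set F : ℝ → ℕ → ℝ := fun T n => (2 / T) * (α n * I n T) with hF
  have hIbound : ∀ n T, 0 < T → |I n T| ≤ T := by
    intro n T hT
    have h4 := intervalIntegral.norm_integral_le_of_norm_le_const
      (C := 1) (f := fun t => Real.sin (p n * t) * Real.sin (q * t)) (a := (0:ℝ)) (b := T) ?_
    · simpa [Real.norm_eq_abs, abs_of_pos hT] using h4
    · intro x _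
      rw [Real.norm_eq_abs, abs_mul]
      exact mul_le_one₀ (Real.abs_sin_le_one _) (abs_nonneg _) (Real.abs_sin_le_one _)
  have hlim : ∀ n, Tendsto (fun T => F T n) atTop (𝓝 (if n = m then α m else 0)) := by
    intro n
    by_cases hnm : n = m
    · subst hnm
      simp only [if_pos rfl]
      apply tendsto_of_abs_sub_le' _ _ (|α n| / q)
      filter_upwards [eventually_gt_atTop (0:ℝ)] with T hT
      have hIval : I n T = T / 2 - Real.sin (q * T) * Real.cos (q * T) / (2 * q) := by
        show (∫ t in (0:ℝ)..T, Real.sin (q * t) * Real.sin (q * t)) = _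
        simp_rw [← sq]
        exact integral_sin_sq'' q hq0.ne' T
      have h5 : F T n - α n = -(α n * (Real.sin (q * T) * Real.cos (q * T)) / (q * T)) := by
        show (2 / T) * (α n * I n T) - α n = _
        rw [hIval]
        field_simp
        ring
      show |F T n - α n| ≤ |α n| / q / T
      rw [h5, abs_neg, abs_div, abs_mul]
      rw [abs_of_pos (mul_pos hq0 hT), div_div]
      gcongr
      refine mul_le_of_le_one_right (abs_nonneg _) ?_
      rw [abs_mul]
      exact mul_le_one₀ (Real.abs_sin_le_one _) (abs_nonneg _) (Real.abs_cos_le_one _)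
    · simp only [if_neg hnm]
      have hne : p n - q ≠ 0 := sub_ne_zero.mpr (fun h => hnm (hmono.injective h))
      have hadd : 0 < p n + q := add_pos (hpos n) hq0
      set C : ℝ := 1 / (2 * |p n - q|) + 1 / (2 * (p n + q)) with hC
      have hIC : ∀ T : ℝ, |I n T| ≤ C := by
        intro T
        have hIval : I n T = Real.sin ((p n - q) * T) / (2 * (p n - q))
            - Real.sin ((p n + q) * T) / (2 * (p n + q)) := by
          show (∫ t in (0:ℝ)..T, Real.sin (p n * t) * Real.sin (q * t)) = _
          exact integral_sin_mul_sin'' (p n) q hne hadd.ne' T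
        rw [hIval, hC]
        refine (abs_sub _ _).trans ?_
        gcongr
        · rw [abs_div, abs_mul, abs_two]
          gcongr
          exact Real.abs_sin_le_one _
        · rw [abs_div, abs_mul, abs_two, abs_of_pos hadd]
          gcongr
          exact Real.abs_sin_le_one _
      apply tendsto_of_abs_sub_le' _ _ (2 * |α n| * C)
      filter_upwards [eventually_gt_atTop (0:ℝ)] with T hT
      have : |F T n - 0| = (2 / T) * (|α n| * |I n T|) := by
        rw [sub_zero]
        show |(2 / T) * (α n * I n T)| = _
        rw [abs_mul, abs_mul, abs_of_pos (by positivity : (0:ℝ) < 2 / T)]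
      show |F T n - 0| ≤ 2 * |α n| * C / T
      rw [this]
      have hC0 : 0 ≤ C := le_trans (abs_nonneg _) (hIC 0)
      calc (2 / T) * (|α n| * |I n T|) ≤ (2 / T) * (|α n| * C) := by
            gcongr
            exact hIC T
        _ = 2 * |α n| * C / T := by ring
  have hbound : ∀ᶠ T in atTop, ∀ n, ‖F T n‖ ≤ 2 * |α n| := by
    filter_upwards [eventually_gt_atTop (0:ℝ)] with T hT n
    rw [Real.norm_eq_abs]
    show |(2 / T) * (α n * I n T)| ≤ 2 * |α n|
    rw [abs_mul, abs_mul, abs_of_pos (by positivity : (0:ℝ) < 2 / T)]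
    calc (2 / T) * (|α n| * |I n T|) ≤ (2 / T) * (|α n| * T) := by
          gcongr
          exact hIbound n T hT
      _ = 2 * |α n| := by field_simp
  have hconv := tendsto_tsum_of_dominated_convergence (𝓕 := atTop)
    (f := F) (g := fun n => if n = m then α m else 0) (bound := fun n => 2 * |α n|)
    (hsum.mul_left 2) hlim hbound
  rw [tsum_ite_eq] at hconv
  have h0 : Tendsto (fun T => ∑' n, F T n) atTop (𝓝 0) := by
    have heq : (fun T => ∑' n, F T n) =ᶠ[atTop] fun _ => 0 := by
      filter_upwards [eventually_gt_atTop (0:ℝ)] with T hT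
      show ∑' n, (2 / T) * (α n * I n T) = 0
      rw [tsum_mul_left, key T hT, mul_zero]
    exact Tendsto.congr' heq.symm tendsto_const_nhds
  exact tendsto_nhds_unique hconv h0
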